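/- The space c_{0I}³(Δ, F) is not symmetric in general: there exists x ∈ c_{0I}³(Δ, F) (with f_{pqr} = identity) and a permutation π of index points such that the rearranged sequence (x_{π(p,q,r)}) has |Δx_{π(p,q,r)}| = 1 for infinitely many (p,q,r), hence does not lie in c_{0I}³(Δ, F) when I is the ideal of finite sets. -/

import Mathlib

/-- The triple difference operator. -/
def tDelta (x : ℕ × ℕ × ℕ → ℂ) (t : ℕ × ℕ × ℕ) : ℂ :=
  x (t.1, t.2.1, t.2.2) - x (t.1 + 1, t.2.1, t.2.2) - x (t.1, t.2.1 + 1, t.2.2)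
    - x (t.1, t.2.1, t.2.2 + 1) + x (t.1 + 1, t.2.1 + 1, t.2.2)
    + x (t.1 + 1, t.2.1, t.2.2 + 1) + x (t.1, t.2.1 + 1, t.2.2 + 1)
    - x (t.1 + 1, t.2.1 + 1, t.2.2 + 1)

open Classical in
/-- Auxiliary: a permutation of a type exchanging two sets with matching
equivalences on them and their complements. -/
noncomputable def matchPerm {α : Type*} (A B : Set α) (e : A ≃ B) (e' : (Aᶜ : Set α) ≃ (Bᶜ : Set α)) :
    Equiv.Perm α :=
  (Equiv.Set.sumCompl A).symm.trans ((e.sumCongr e').trans (Equiv.Set.sumCompl B))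

theorem matchPerm_mem {α : Type*} (A B : Set α) (e : A ≃ B) (e' : (Aᶜ : Set α) ≃ (Bᶜ : Set α))
    (s : α) : matchPerm A B e e' s ∈ B ↔ s ∈ A := by
  classical
  unfold matchPerm
  by_cases h : s ∈ A
  · simp [Equiv.Set.sumCompl_symm_apply_of_mem h, h, Subtype.coe_prop]
  · simp [Equiv.Set.sumCompl_symm_apply_of_notMem h, h]
    exact (e' ⟨s, h⟩).2

/-- c_{0I}³(Δ,F) is not symmetric: there is a sequence in the space (for the
finite-set ideal and identity modulus) and a permutation of ℕ³ whose
rearrangement has |Δ| = 1 infinitely often, hence lies outside the space. -/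
theorem stmt_15 :
    ∃ x : ℕ × ℕ × ℕ → ℂ, ∃ π : Equiv.Perm (ℕ × ℕ × ℕ),
      (∀ ε > (0 : ℝ), {t | ε ≤ ‖tDelta x t‖}.Finite) ∧
      {t | ‖tDelta (fun s => x (π s)) t‖ = 1}.Infinite ∧
      ¬ (∀ ε > (0 : ℝ), {t | ε ≤ ‖tDelta (fun s => x (π s)) t‖}.Finite) := by
  classical
  set A : Set (ℕ × ℕ × ℕ) := {s | s.1 % 2 = 0 ∧ s.2.1 % 2 = 0 ∧ s.2.2 % 2 = 0} with hA
  set B : Set (ℕ × ℕ × ℕ) := {s | s.2.2 ≠ 0} with hB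
  -- infiniteness of the four sets
  have hAinf : A.Infinite :=
    Set.infinite_of_injective_forall_mem (f := fun n : ℕ => (2*n, 2*n, 2*n))
      (fun a b h => by simpa using h) (fun n => by simp [hA, Nat.mul_mod_right])
  have hAcinf : (Aᶜ : Set (ℕ × ℕ × ℕ)).Infinite :=
    Set.infinite_of_injective_forall_mem (f := fun n : ℕ => (1, n, 0))
      (fun a b h => by simpa using h) (fun n => by simp [hA])
  have hBinf : B.Infinite :=
    Set.infinite_of_injective_forall_mem (f := fun n : ℕ => (n, 0, 1))
      (fun a b h => by simpa using h) (fun n => by simp [hB])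
  have hBcinf : (Bᶜ : Set (ℕ × ℕ × ℕ)).Infinite :=
    Set.infinite_of_injective_forall_mem (f := fun n : ℕ => (n, 0, 0))
      (fun a b h => by simpa using h) (fun n => by simp [hB])
  haveI := hAinf.to_subtype
  haveI := hAcinf.to_subtype
  haveI := hBinf.to_subtype
  haveI := hBcinf.to_subtype
  obtain ⟨dA⟩ := nonempty_denumerable A
  obtain ⟨dAc⟩ := nonempty_denumerable (Aᶜ : Set (ℕ × ℕ × ℕ))
  obtain ⟨dB⟩ := nonempty_denumerable B
  obtain ⟨dBc⟩ := nonempty_denumerable (Bᶜ : Set (ℕ × ℕ × ℕ))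
  let e : A ≃ B := (@Denumerable.eqv _ dA).trans (@Denumerable.eqv _ dB).symm
  let e' : (Aᶜ : Set (ℕ × ℕ × ℕ)) ≃ (Bᶜ : Set (ℕ × ℕ × ℕ)) :=
    (@Denumerable.eqv _ dAc).trans (@Denumerable.eqv _ dBc).symm
  let π := matchPerm A B e e'
  let x : ℕ × ℕ × ℕ → ℂ := fun s => if s ∈ B then 1 else 0
  refine ⟨x, π, ?_, ?_, ?_⟩
  · -- Δx ≡ 0
    have hzero : ∀ t, tDelta x t = 0 := by
      intro t
      simp only [tDelta, x, hB, Set.mem_setOf_eq, Nat.succ_ne_zero, ne_eq,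
        not_true_eq_false, not_false_eq_true, if_true, if_neg]
      by_cases h : t.2.2 = 0 <;> simp [h]
    intro ε hε
    have : {t | ε ≤ ‖tDelta x t‖} = ∅ := by
      ext t
      simp [hzero t, not_le, hε]
    simp [this]
  · -- the rearrangement
    have hxy : (fun s => x (π s)) = fun s => if s ∈ A then (1 : ℂ) else 0 := by
      funext s
      simp only [x]
      by_cases h : s ∈ A
      · rw [if_pos ((matchPerm_mem A B e e' s).mpr h), if_pos h]
      · rw [if_neg ((matchPerm_mem A B e e' s).not.mpr h), if_neg h]
    rw [hxy]
    apply Set.infinite_of_injective_forall_mem (f := fun n : ℕ => (2*n, 2*n, 2*n))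
      (fun a b h => by simpa using h)
    · intro n
      have hval : tDelta (fun s => if s ∈ A then (1 : ℂ) else 0) (2*n, 2*n, 2*n) = 1 := by
        simp [tDelta, hA, Nat.mul_mod_right, Nat.mul_add_mod]
      simp [Set.mem_setOf_eq, hval]
  · -- not finite for ε = 1
    intro hcontra
    have h1 := hcontra 1 one_pos
    have hxy : (fun s => x (π s)) = fun s => if s ∈ A then (1 : ℂ) else 0 := by
      funext s
      simp only [x]
      by_cases h : s ∈ A
      · rw [if_pos ((matchPerm_mem A B e e' s).mpr h), if_pos h]
      · rw [if_neg ((matchPerm_mem A B e e' s).not.mpr h), if_neg h]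
    rw [hxy] at h1
    have : {t : ℕ × ℕ × ℕ | (1:ℝ) ≤ ‖tDelta (fun s => if s ∈ A then (1 : ℂ) else 0) t‖}.Infinite := by
      apply Set.infinite_of_injective_forall_mem (f := fun n : ℕ => (2*n, 2*n, 2*n))
        (fun a b h => by simpa using h)
      · intro n
        have hval : tDelta (fun s => if s ∈ A then (1 : ℂ) else 0) (2*n, 2*n, 2*n) = 1 := by
          simp [tDelta, hA, Nat.mul_mod_right, Nat.mul_add_mod]
        simp [Set.mem_setOf_eq, hval]
    exact this h1
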